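/- Let m ≥ 1 and κ = (κ_1 ≥ … ≥ κ_m ≥ 0) a partition. For every complex Hermitian positive semidefinite m×m matrix x, the value Φ_κ(x) = ∫_{U(m)} Δ_κ(u x u*) du is a nonnegative real number, and if rank(x) = k and the length l(κ) = k, then Φ_κ(x) > 0. -/

import Mathlib

open MeasureTheory Matrix
open scoped ComplexOrder

noncomputable instance matrixMeasurableSpace {k l α : Type*} [MeasurableSpace α] :
    MeasurableSpace (Matrix k l α) :=
  inferInstanceAs (MeasurableSpace (k → l → α))

/-- The `i`-th leading principal minor of a complex `m×m` matrix (`i ≤ m`), as a real number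
(for Hermitian matrices the leading principal minors are real). -/
noncomputable def leadingMinorC {m : ℕ} (x : Matrix (Fin m) (Fin m) ℂ) (i : ℕ) (h : i ≤ m) :
    ℝ :=
  (x.submatrix (Fin.castLE h) (Fin.castLE h)).det.re

/-- The generalized power `Δ_κ(x) = ∏_{i=1}^m Δ_i(x)^(κ_i − κ_{i+1})` (`κ_{m+1} := 0`) on
complex matrices, with the partition `κ` indexed by `Fin m` (so `κ j` is the part `κ_{j+1}`). -/
noncomputable def DeltaKappaC {m : ℕ} (κ : Fin m → ℕ) (x : Matrix (Fin m) (Fin m) ℂ) : ℝ :=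
  ∏ i : Fin m, leadingMinorC x ((i : ℕ) + 1) i.isLt ^
    (κ i - if h : (i : ℕ) + 1 < m then κ ⟨(i : ℕ) + 1, h⟩ else 0)

/-- `μ` is the normalized Haar measure on the unitary group `U(m)`: a left-translation
invariant Borel probability measure (such a measure is unique on the compact group `U(m)`). -/
def IsHaarU (m : ℕ) (μ : Measure (Matrix.unitaryGroup (Fin m) ℂ)) : Prop :=
  IsProbabilityMeasure μ ∧
    ∀ v : Matrix.unitaryGroup (Fin m) ℂ, μ.map (fun u => v * u) = μ

/-- The spherical polynomial `Φ_κ(x) = ∫_{U(m)} Δ_κ(u x u*) du` on the cone of Hermitian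
positive semidefinite matrices, relative to the normalized Haar measure `μ` on `U(m)`. -/
noncomputable def PhiKC {m : ℕ} (μ : Measure (Matrix.unitaryGroup (Fin m) ℂ))
    (κ : Fin m → ℕ) (x : Matrix (Fin m) (Fin m) ℂ) : ℝ :=
  ∫ u, DeltaKappaC κ
    ((u : Matrix (Fin m) (Fin m) ℂ) * x * star (u : Matrix (Fin m) (Fin m) ℂ)) ∂μ

instance matrixBorelSpace {k l : Type*} [Countable k] [Countable l] :
    BorelSpace (Matrix k l ℂ) :=
  inferInstanceAs (BorelSpace (k → l → ℂ))

instance unitaryGroupBorelSpace {m : ℕ} : BorelSpace (Matrix.unitaryGroup (Fin m) ℂ) :=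
  Subtype.borelSpace _

lemma isCompact_unitaryGroupSet (m : ℕ) :
    IsCompact (Matrix.unitaryGroup (Fin m) ℂ : Set (Matrix (Fin m) (Fin m) ℂ)) := by
  have hclosed : IsClosed (Matrix.unitaryGroup (Fin m) ℂ : Set (Matrix (Fin m) (Fin m) ℂ)) := by
    have hset : (Matrix.unitaryGroup (Fin m) ℂ : Set (Matrix (Fin m) (Fin m) ℂ)) =
        {U | star U * U = 1} ∩ {U | U * star U = 1} := by
      ext U
      exact Unitary.mem_iff
    rw [hset]
    exact (isClosed_eq ((continuous_id.matrix_conjTranspose.matrix_mul continuous_id))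
        continuous_const).inter
      (isClosed_eq ((continuous_id.matrix_mul continuous_id.matrix_conjTranspose))
        continuous_const)
  have hbox : IsCompact ((Set.univ.pi fun _ : Fin m => Set.univ.pi fun _ : Fin m =>
      Metric.closedBall (0 : ℂ) 1 : Set (Fin m → Fin m → ℂ)) :
        Set (Matrix (Fin m) (Fin m) ℂ)) :=
    isCompact_univ_pi fun _ => isCompact_univ_pi fun _ => isCompact_closedBall 0 1
  refine hbox.of_isClosed_subset hclosed ?_
  intro (U : Matrix (Fin m) (Fin m) ℂ) (hU : U ∈ Matrix.unitaryGroup (Fin m) ℂ)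
  have h1 : star U * U = 1 := Matrix.mem_unitaryGroup_iff'.mp hU
  intro i _ j _
  have hdiag : ∑ p, star (U p j) * U p j = 1 := by
    have := congrFun (congrFun h1 j) j
    simpa [Matrix.mul_apply, Matrix.one_apply, Matrix.conjTranspose_apply] using this
  have hsum : ∑ p, (Complex.normSq (U p j) : ℂ) = 1 := by
    rw [← hdiag]
    refine Finset.sum_congr rfl fun p _ => ?_
    rw [Complex.star_def, Complex.normSq_eq_conj_mul_self]
  have hsumR : ∑ p, Complex.normSq (U p j) = 1 := by
    exact_mod_cast hsum
  have hle : Complex.normSq (U i j) ≤ 1 := by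
    rw [← hsumR]
    exact Finset.single_le_sum (f := fun p => Complex.normSq (U p j))
      (fun p _ => Complex.normSq_nonneg _) (Finset.mem_univ i)
  have : ‖U i j‖ ≤ 1 := by
    rw [Complex.norm_def]
    simpa using Real.sqrt_le_sqrt hle
  simpa [Metric.mem_closedBall, Complex.dist_eq] using this

instance unitaryGroupCompactSpace {m : ℕ} : CompactSpace (Matrix.unitaryGroup (Fin m) ℂ) :=
  isCompact_iff_compactSpace.mp (isCompact_unitaryGroupSet m)

/-- The spherical-polynomial integrand is continuous in `u`. -/
lemma continuous_deltaIntegrand {m : ℕ} (κ : Fin m → ℕ) (x : Matrix (Fin m) (Fin m) ℂ) :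
    Continuous (fun u : Matrix.unitaryGroup (Fin m) ℂ =>
      DeltaKappaC κ ((u : Matrix (Fin m) (Fin m) ℂ) * x * star (u : Matrix (Fin m) (Fin m) ℂ))) := by
  have hcoe : Continuous (fun u : Matrix.unitaryGroup (Fin m) ℂ =>
      (u : Matrix (Fin m) (Fin m) ℂ)) := continuous_subtype_val
  have hmat : Continuous (fun u : Matrix.unitaryGroup (Fin m) ℂ =>
      (u : Matrix (Fin m) (Fin m) ℂ) * x * star (u : Matrix (Fin m) (Fin m) ℂ)) :=
    (hcoe.matrix_mul continuous_const).matrix_mul hcoe.matrix_conjTranspose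
  unfold DeltaKappaC leadingMinorC
  refine continuous_finset_prod _ fun i _ => ?_
  exact ((Complex.continuous_re.comp ((hmat.matrix_submatrix _ _).matrix_det)).pow _)

/-- A left-invariant probability measure on the unitary group is positive on open sets. -/
lemma IsHaarU.open_pos {m : ℕ} {μ : Measure (Matrix.unitaryGroup (Fin m) ℂ)}
    (hμ : IsHaarU m μ) {U : Set (Matrix.unitaryGroup (Fin m) ℂ)} (hU : IsOpen U)
    (hne : U.Nonempty) : 0 < μ U := by
  haveI : IsProbabilityMeasure μ := hμ.1
  by_contra h
  push_neg at h
  have hU0 : μ U = 0 := le_antisymm (by simpa using h) (zero_le)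
  obtain ⟨u₀, hu₀⟩ := hne
  -- cover the group by translates of `U`
  have hcover : (Set.univ : Set (Matrix.unitaryGroup (Fin m) ℂ)) ⊆
      ⋃ g : Matrix.unitaryGroup (Fin m) ℂ, (fun h => g * h) ⁻¹' U := by
    intro h _
    refine Set.mem_iUnion.mpr ⟨u₀ * h⁻¹, ?_⟩
    simp [hu₀, mul_assoc]
  obtain ⟨t, ht⟩ := isCompact_univ.elim_finite_subcover
    (fun g : Matrix.unitaryGroup (Fin m) ℂ => (fun h => g * h) ⁻¹' U)
    (fun g => hU.preimage (continuous_mul_left g)) hcover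
  have htr : ∀ g : Matrix.unitaryGroup (Fin m) ℂ, μ ((fun h => g * h) ⁻¹' U) = 0 := by
    intro g
    have hmeas : Measurable (fun h : Matrix.unitaryGroup (Fin m) ℂ => g * h) :=
      (continuous_mul_left g).measurable
    have := hμ.2 g
    calc μ ((fun h => g * h) ⁻¹' U) = (μ.map (fun h => g * h)) U := by
          rw [Measure.map_apply hmeas hU.measurableSet]
      _ = μ U := by rw [this]
      _ = 0 := hU0
  have : μ (Set.univ : Set (Matrix.unitaryGroup (Fin m) ℂ)) = 0 := by
    refine le_antisymm ?_ (zero_le)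
    calc μ Set.univ ≤ μ (⋃ g ∈ t, (fun h => g * h) ⁻¹' U) := measure_mono ht
      _ ≤ ∑ g ∈ t, μ ((fun h => g * h) ⁻¹' U) := measure_biUnion_finset_le _ _
      _ = 0 := by simp [htr]
  simp at this



/-- The real part of the determinant of a PSD complex matrix is nonnegative. -/
lemma det_re_nonneg_of_posSemidef {n : Type*} [Fintype n] [DecidableEq n]
    {A : Matrix n n ℂ} (hA : A.PosSemidef) : 0 ≤ A.det.re := by
  rw [hA.isHermitian.det_eq_prod_eigenvalues]
  rw [← RCLike.re_to_complex, ← RCLike.ofReal_prod, RCLike.ofReal_re]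
  exact Finset.prod_nonneg fun i _ => hA.eigenvalues_nonneg i

lemma deltaKappaC_nonneg {m : ℕ} (κ : Fin m → ℕ) {y : Matrix (Fin m) (Fin m) ℂ}
    (hy : y.PosSemidef) : 0 ≤ DeltaKappaC κ y := by
  refine Finset.prod_nonneg fun i _ => pow_nonneg ?_ _
  exact det_re_nonneg_of_posSemidef (hy.submatrix _)

/-- Spherical polynomials on the cone of complex Hermitian positive semidefinite matrices:
`Φ_κ(x) ≥ 0` for Hermitian positive semidefinite `x`, and `Φ_κ(x) > 0` whenever `rank x = k`
and the partition `κ` has length `l(κ) = k`. -/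
theorem sphericalPoly_hermitian_nonneg_and_pos
    (m : ℕ) (hm : 1 ≤ m) (κ : Fin m → ℕ) (hκ : Antitone κ)
    (μ : Measure (Matrix.unitaryGroup (Fin m) ℂ)) (hμ : IsHaarU m μ)
    (x : Matrix (Fin m) (Fin m) ℂ) (hx : x.PosSemidef) :
    0 ≤ PhiKC μ κ x ∧
      ∀ k : ℕ, x.rank = k → (∀ i : Fin m, (i : ℕ) < k ↔ κ i ≠ 0) → 0 < PhiKC μ κ x := by
  haveI : IsProbabilityMeasure μ := hμ.1
  have hFnonneg : ∀ u : Matrix.unitaryGroup (Fin m) ℂ,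
      0 ≤ DeltaKappaC κ ((u : Matrix (Fin m) (Fin m) ℂ) * x *
        star (u : Matrix (Fin m) (Fin m) ℂ)) := by
    intro u
    refine deltaKappaC_nonneg κ ?_
    simpa [Matrix.star_eq_conjTranspose] using
      hx.mul_mul_conjTranspose_same (u : Matrix (Fin m) (Fin m) ℂ)
  constructor
  · exact integral_nonneg hFnonneg
  · intro k hrank hlen
    classical
    set hH : x.IsHermitian := hx.isHermitian with hHdef
    set π : Equiv.Perm (Fin m) := Fin.revPerm.trans (Tuple.sort hH.eigenvalues) with hπ
    set f : Fin m → ℝ := fun i => hH.eigenvalues (π i) with hfdef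
    have hf_anti : Antitone f := by
      intro i j hij
      have := Tuple.monotone_sort hH.eigenvalues (Fin.rev_le_rev.mpr hij)
      simpa [hfdef, hπ] using this
    have hf_nonneg : ∀ i, 0 ≤ f i := fun i => hx.eigenvalues_nonneg _
    have hcard : Fintype.card {i // f i ≠ 0} = k := by
      have h1 : Fintype.card {i // f i ≠ 0} = Fintype.card {i // hH.eigenvalues i ≠ 0} :=
        Fintype.card_congr (Equiv.subtypeEquiv π fun i => Iff.rfl)
      rw [h1, ← hH.rank_eq_card_non_zero_eigs, hrank]
    have hfk : ∀ j : Fin m, (j : ℕ) < k → 0 < f j := by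
      intro j hj
      by_contra hle
      push_neg at hle
      have hfj : f j = 0 := le_antisymm hle (hf_nonneg j)
      have hinj : Function.Injective (fun i : {i // f i ≠ 0} =>
          (⟨(i : Fin m), by
            have hlt : (i : Fin m) < j := by
              by_contra hge
              push_neg at hge
              exact i.2 (le_antisymm ((hf_anti hge).trans hfj.le) (hf_nonneg _))
            exact hlt⟩ : Fin (j : ℕ))) := by
        intro a b hab
        have h2 : ((a : Fin m) : ℕ) = ((b : Fin m) : ℕ) := by
          simpa using congrArg Fin.val hab
        exact Subtype.ext (Fin.ext h2)
      have := Fintype.card_le_of_injective _ hinj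
      rw [hcard, Fintype.card_fin] at this
      omega
    -- the diagonalizing unitary
    set V : Matrix.unitaryGroup (Fin m) ℂ := hH.eigenvectorUnitary with hV
    set Q : Matrix (Fin m) (Fin m) ℂ := π.toPEquiv.toMatrix with hQ
    have hstarQ : star Q = π.symm.toPEquiv.toMatrix := by
      ext i j
      simp only [hQ, Matrix.star_eq_conjTranspose, Matrix.conjTranspose_apply,
        PEquiv.toMatrix_apply, Equiv.toPEquiv_apply, Option.mem_def, Option.some.injEq,
        apply_ite, star_one, star_zero]
      by_cases h : π j = i
      · subst h
        simp
      · have h2 : π.symm i ≠ j := fun hc => h (by rw [← hc, Equiv.apply_symm_apply])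
        simp [h, h2]
    have hQmem : Q ∈ Matrix.unitaryGroup (Fin m) ℂ := by
      rw [Matrix.mem_unitaryGroup_iff', hstarQ, hQ, PEquiv.toMatrix_toPEquiv_mul]
      ext i j
      simp [PEquiv.toMatrix_apply, Equiv.toPEquiv_apply, Matrix.one_apply,
        Matrix.submatrix_apply, Equiv.apply_symm_apply]
    set u₀ : Matrix.unitaryGroup (Fin m) ℂ := ⟨Q, hQmem⟩ * star V with hu₀def
    set d : Fin m → ℂ := fun i => (f i : ℂ) with hd
    have hdiag : (u₀ : Matrix (Fin m) (Fin m) ℂ) * x * star (u₀ : Matrix (Fin m) (Fin m) ℂ)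
        = Matrix.diagonal d := by
      have hcoe : (u₀ : Matrix (Fin m) (Fin m) ℂ) =
          Q * star (V : Matrix (Fin m) (Fin m) ℂ) := rfl
      have hVd : star (V : Matrix (Fin m) (Fin m) ℂ) * x * (V : Matrix (Fin m) (Fin m) ℂ) =
          Matrix.diagonal (RCLike.ofReal ∘ hH.eigenvalues) :=
        by simpa using hH.conjStarAlgAut_star_eigenvectorUnitary
      calc (u₀ : Matrix (Fin m) (Fin m) ℂ) * x * star (u₀ : Matrix (Fin m) (Fin m) ℂ)
          = Q * (star (V : Matrix (Fin m) (Fin m) ℂ) * x * (V : Matrix (Fin m) (Fin m) ℂ)) *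
            star Q := by
            rw [hcoe, Matrix.star_mul, star_star]
            noncomm_ring
        _ = Q * Matrix.diagonal (RCLike.ofReal ∘ hH.eigenvalues) * star Q := by rw [hVd]
        _ = Matrix.diagonal d := by
            rw [hstarQ, hQ, PEquiv.toMatrix_toPEquiv_mul, PEquiv.mul_toMatrix_toPEquiv,
              Equiv.symm_symm, Matrix.submatrix_submatrix, Function.comp_id, Function.id_comp,
              Matrix.submatrix_diagonal _ _ π.injective]
            rfl
    have hval : 0 < DeltaKappaC κ (Matrix.diagonal d) := by
      unfold DeltaKappaC
      refine Finset.prod_pos fun i _ => ?_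
      rcases Nat.eq_zero_or_pos
        (κ i - if h : (i : ℕ) + 1 < m then κ ⟨(i : ℕ) + 1, h⟩ else 0) with he | he
      · rw [he, pow_zero]
        exact one_pos
      · refine pow_pos ?_ _
        have hκi : κ i ≠ 0 := by omega
        have hik : (i : ℕ) < k := (hlen i).mpr hκi
        unfold leadingMinorC
        rw [Matrix.submatrix_diagonal _ _ (Fin.castLE_injective _), Matrix.det_diagonal]
        have hprod : (∏ j : Fin ((i : ℕ) + 1), (d ∘ Fin.castLE i.isLt) j)
            = ((∏ j : Fin ((i : ℕ) + 1), f (Fin.castLE i.isLt j) : ℝ) : ℂ) := by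
          rw [Complex.ofReal_prod]
          rfl
        rw [hprod, Complex.ofReal_re]
        refine Finset.prod_pos fun j _ => hfk _ ?_
        have : ((Fin.castLE i.isLt j : Fin m) : ℕ) = (j : ℕ) := rfl
        omega
    have hFcont := continuous_deltaIntegrand κ x
    have hInt : Integrable (fun u : Matrix.unitaryGroup (Fin m) ℂ =>
        DeltaKappaC κ ((u : Matrix (Fin m) (Fin m) ℂ) * x *
          star (u : Matrix (Fin m) (Fin m) ℂ))) μ :=
      hFcont.integrable_of_hasCompactSupport ((isClosed_tsupport _).isCompact)
    have hUopen : IsOpen ((fun u : Matrix.unitaryGroup (Fin m) ℂ =>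
        DeltaKappaC κ ((u : Matrix (Fin m) (Fin m) ℂ) * x *
          star (u : Matrix (Fin m) (Fin m) ℂ))) ⁻¹' Set.Ioi 0) :=
      isOpen_Ioi.preimage hFcont
    have hne : ((fun u : Matrix.unitaryGroup (Fin m) ℂ =>
        DeltaKappaC κ ((u : Matrix (Fin m) (Fin m) ℂ) * x *
          star (u : Matrix (Fin m) (Fin m) ℂ))) ⁻¹' Set.Ioi 0).Nonempty := by
      refine ⟨u₀, ?_⟩
      simpa [Set.mem_preimage, hdiag] using hval
    have hμpos : 0 < μ (Function.support (fun u : Matrix.unitaryGroup (Fin m) ℂ =>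
        DeltaKappaC κ ((u : Matrix (Fin m) (Fin m) ℂ) * x *
          star (u : Matrix (Fin m) (Fin m) ℂ)))) :=
      lt_of_lt_of_le (hμ.open_pos hUopen hne) (measure_mono fun u hu => ne_of_gt hu)
    exact (integral_pos_iff_support_of_nonneg (fun u => hFnonneg u) hInt).mpr hμpos
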